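/- Let 0 < γ ≤ 1 and 0 < β_0, β_1, ..., β_k ≤ 1, and let T_R, T_0, T_1, ..., T_k be mutually independent random variables taking values in the positive integers with P(T_R = t) = γ(1−γ)^{t−1} and P(T_i = t) = β_i(1−β_i)^{t−1} for each i ∈ {0,1,...,k} and every integer t ≥ 1. Then P(T_0 ≤ T_R and T_i > T_R for all i ∈ {1,...,k}) ≤ P(T_0 ≤ T_R) · P(T_i > T_R for all i ∈ {1,...,k}). -/

import Mathlib

open MeasureTheory ProbabilityTheory

lemma cheb_aux (a b c : ℕ → ℝ) (ha : ∀ t, 0 ≤ a t)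
    (hb0 : ∀ t, 0 ≤ b t) (hb1 : ∀ t, b t ≤ 1)
    (hc0 : ∀ t, 0 ≤ c t) (hc1 : ∀ t, c t ≤ 1)
    (hbm : Monotone b) (hcm : Antitone c)
    (hsa : Summable a) (ha1 : ∑' t, a t = 1) :
    ∑' t, a t * (b t * c t) ≤ (∑' t, a t * b t) * (∑' t, a t * c t) := by
  have hab : Summable (fun t => a t * b t) := by
    refine Summable.of_nonneg_of_le (fun t => mul_nonneg (ha t) (hb0 t))
      (fun t => ?_) hsa
    calc a t * b t ≤ a t * 1 := mul_le_mul_of_nonneg_left (hb1 t) (ha t)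
      _ = a t := mul_one _
  have hac : Summable (fun t => a t * c t) := by
    refine Summable.of_nonneg_of_le (fun t => mul_nonneg (ha t) (hc0 t))
      (fun t => ?_) hsa
    calc a t * c t ≤ a t * 1 := mul_le_mul_of_nonneg_left (hc1 t) (ha t)
      _ = a t := mul_one _
  have habc : Summable (fun t => a t * (b t * c t)) := by
    refine Summable.of_nonneg_of_le
      (fun t => mul_nonneg (ha t) (mul_nonneg (hb0 t) (hc0 t))) (fun t => ?_) hsa
    calc a t * (b t * c t) ≤ a t * 1 := by
          refine mul_le_mul_of_nonneg_left ?_ (ha t)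
          calc b t * c t ≤ 1 * 1 := mul_le_mul (hb1 t) (hc1 t) (hc0 t) zero_le_one
            _ = 1 := one_mul 1
      _ = a t := mul_one _
  set S1 := ∑' t, a t * (b t * c t) with hS1
  set S2 := ∑' t, a t * b t with hS2
  set S3 := ∑' t, a t * c t with hS3
  have claim1 : ∀ t, a t * (b t * c t - b t * S3 - c t * S2 + S1) ≤ 0 := by
    intro t
    have hinner : ∑' s, a t * a s * ((b t - b s) * (c t - c s)) =
        a t * (b t * c t - b t * S3 - c t * S2 + S1) := by
      have e1 : ∀ s, a t * a s * ((b t - b s) * (c t - c s)) =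
          (a t * (b t * c t)) * a s - (a t * b t) * (a s * c s)
            - (a t * c t) * (a s * b s) + a t * (a s * (b s * c s)) := by
        intro s; ring
      rw [tsum_congr e1]
      rw [Summable.tsum_add (((hsa.mul_left _).sub (hac.mul_left _)).sub (hab.mul_left _))
        (habc.mul_left _)]
      rw [Summable.tsum_sub ((hsa.mul_left _).sub (hac.mul_left _)) (hab.mul_left _)]
      rw [Summable.tsum_sub (hsa.mul_left _) (hac.mul_left _)]
      rw [tsum_mul_left, tsum_mul_left, tsum_mul_left, tsum_mul_left, ha1]
      ring
    rw [← hinner]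
    refine tsum_nonpos (fun s => ?_)
    have hkey : (b t - b s) * (c t - c s) ≤ 0 := by
      rcases le_total t s with h | h
      · exact mul_nonpos_of_nonpos_of_nonneg (by linarith [hbm h]) (by linarith [hcm h])
      · exact mul_nonpos_of_nonneg_of_nonpos (by linarith [hbm h]) (by linarith [hcm h])
    exact mul_nonpos_of_nonneg_of_nonpos (mul_nonneg (ha t) (ha s)) hkey
  have claim2 : ∑' t, a t * (b t * c t - b t * S3 - c t * S2 + S1) = 2 * (S1 - S2 * S3) := by
    have e1 : ∀ t, a t * (b t * c t - b t * S3 - c t * S2 + S1) =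
        a t * (b t * c t) - S3 * (a t * b t) - S2 * (a t * c t) + S1 * a t := by
      intro t; ring
    rw [tsum_congr e1]
    rw [Summable.tsum_add ((habc.sub (hab.mul_left _)).sub (hac.mul_left _)) (hsa.mul_left _)]
    rw [Summable.tsum_sub (habc.sub (hab.mul_left _)) (hac.mul_left _)]
    rw [Summable.tsum_sub habc (hab.mul_left _)]
    rw [tsum_mul_left, tsum_mul_left, tsum_mul_left, ha1]
    ring
  have h := tsum_nonpos (L := SummationFilter.unconditional ℕ) claim1
  rw [claim2] at h
  linarith

/-- Let `T_R` be a geometric recovery time with parameter `γ` and `T_0, …, T_k`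
geometric infection times with parameters `β_0, …, β_k`, all mutually independent.
Then `P(T_0 ≤ T_R and T_i > T_R for all i ≠ 0) ≤ P(T_0 ≤ T_R) · P(T_i > T_R for all i ≠ 0)`. -/
theorem stmt_7 {Ω : Type*} [MeasurableSpace Ω] (μ : Measure Ω) [IsProbabilityMeasure μ]
    (k : ℕ) (γ : ℝ) (hγ0 : 0 < γ) (hγ1 : γ ≤ 1)
    (β : Fin (k + 1) → ℝ) (hβ : ∀ i, 0 < β i ∧ β i ≤ 1)
    (TR : Ω → ℕ) (T : Fin (k + 1) → Ω → ℕ)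
    (hTR : Measurable TR) (hT : ∀ i, Measurable (T i))
    (hTRdist : ∀ t : ℕ, 1 ≤ t → μ {ω | TR ω = t} = ENNReal.ofReal (γ * (1 - γ) ^ (t - 1)))
    (hTdist : ∀ i, ∀ t : ℕ, 1 ≤ t →
      μ {ω | T i ω = t} = ENNReal.ofReal (β i * (1 - β i) ^ (t - 1)))
    (hindep : iIndepFun
      (fun o : Option (Fin (k + 1)) => o.elim TR T) μ) :
    μ {ω | T 0 ω ≤ TR ω ∧ ∀ i, i ≠ 0 → TR ω < T i ω} ≤
      μ {ω | T 0 ω ≤ TR ω} * μ {ω | ∀ i, i ≠ 0 → TR ω < T i ω} := by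
  classical
  -- generic independence product
  have haux : ∀ (U : Option (Fin (k + 1)) → Set ℕ),
      μ (⋂ o, (Option.elim o TR T) ⁻¹' U o) =
        μ (TR ⁻¹' U none) * ∏ i, μ (T i ⁻¹' U (some i)) := by
    intro U
    have h := hindep.meas_iInter (s := fun o => (Option.elim o TR T) ⁻¹' U o)
      (fun o => ⟨U o, .of_discrete, rfl⟩)
    rw [h, Fintype.prod_option]
    rfl
  -- the product over i ≠ 0
  have hG : ∀ t : ℕ, μ {ω | ∀ i, i ≠ 0 → t < T i ω} =
      ∏ i ∈ Finset.univ.erase (0 : Fin (k + 1)), μ {ω | t < T i ω} := by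
    intro t
    have h := haux (fun o => o.elim Set.univ
      (fun i => if i = 0 then Set.univ else Set.Ioi t))
    have hset : (⋂ o, (Option.elim o TR T) ⁻¹' (Option.elim o Set.univ
        (fun i => if i = 0 then Set.univ else Set.Ioi t))) =
        {ω | ∀ i, i ≠ 0 → t < T i ω} := by
      ext ω
      simp only [Set.mem_iInter, Set.mem_setOf_eq]
      constructor
      · intro h i hi
        have := h (some i)
        simpa [if_neg hi] using this
      · intro h o
        cases o with
        | none => simp
        | some i =>
          by_cases hi : i = 0
          · simp [hi]
          · simpa [if_neg hi] using h i hi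
    rw [hset] at h
    rw [h]
    simp only [Option.elim_none, Option.elim_some]
    rw [Set.preimage_univ, measure_univ, one_mul,
      ← Finset.mul_prod_erase Finset.univ _ (Finset.mem_univ (0 : Fin (k + 1)))]
    have h0 : μ (T 0 ⁻¹' (if (0 : Fin (k + 1)) = 0 then Set.univ else Set.Ioi t)) = 1 := by
      simp
    rw [h0, one_mul]
    refine Finset.prod_congr rfl fun i hi => ?_
    congr 1
    ext ω
    simp [(Finset.mem_erase.mp hi).1]
  -- fact1 : joint slice
  have fact1 : ∀ t : ℕ,
      μ ({ω | TR ω = t} ∩ {ω | T 0 ω ≤ t ∧ ∀ i, i ≠ 0 → t < T i ω}) =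
        μ {ω | TR ω = t} * (μ {ω | T 0 ω ≤ t} * μ {ω | ∀ i, i ≠ 0 → t < T i ω}) := by
    intro t
    have h := haux (fun o => o.elim {t}
      (fun i => if i = 0 then Set.Iic t else Set.Ioi t))
    have hset : (⋂ o, (Option.elim o TR T) ⁻¹' (Option.elim o {t}
        (fun i => if i = 0 then Set.Iic t else Set.Ioi t))) =
        {ω | TR ω = t} ∩ {ω | T 0 ω ≤ t ∧ ∀ i, i ≠ 0 → t < T i ω} := by
      ext ω
      simp only [Set.mem_iInter, Set.mem_inter_iff, Set.mem_setOf_eq]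
      constructor
      · intro h
        refine ⟨h none, ?_, fun i hi => ?_⟩
        · have := h (some 0); simpa using this
        · have := h (some i); simpa [if_neg hi] using this
      · rintro ⟨h0, h1, h2⟩ o
        cases o with
        | none => exact h0
        | some i =>
          by_cases hi : i = 0
          · subst hi; simpa using h1
          · simpa [if_neg hi] using h2 i hi
    rw [hset] at h
    rw [h, hG t]
    simp only [Option.elim_none, Option.elim_some]
    have hTRpre : TR ⁻¹' ({t} : Set ℕ) = {ω | TR ω = t} := rfl
    rw [hTRpre]
    congr 1
    rw [← Finset.mul_prod_erase Finset.univ _ (Finset.mem_univ (0 : Fin (k + 1)))]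
    have h0 : μ (T 0 ⁻¹' (if (0 : Fin (k + 1)) = 0 then Set.Iic t else Set.Ioi t)) =
        μ {ω | T 0 ω ≤ t} := by rfl
    rw [h0]
    congr 1
    refine Finset.prod_congr rfl fun i hi => ?_
    congr 1
    ext ω
    simp [(Finset.mem_erase.mp hi).1]
  -- fact2
  have fact2 : ∀ t : ℕ,
      μ ({ω | TR ω = t} ∩ {ω | T 0 ω ≤ t}) =
        μ {ω | TR ω = t} * μ {ω | T 0 ω ≤ t} := by
    intro t
    have h := haux (fun o => o.elim {t}
      (fun i => if i = 0 then Set.Iic t else Set.univ))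
    have hset : (⋂ o, (Option.elim o TR T) ⁻¹' (Option.elim o {t}
        (fun i => if i = 0 then Set.Iic t else Set.univ))) =
        {ω | TR ω = t} ∩ {ω | T 0 ω ≤ t} := by
      ext ω
      simp only [Set.mem_iInter, Set.mem_inter_iff, Set.mem_setOf_eq]
      constructor
      · intro h
        refine ⟨h none, ?_⟩
        have := h (some 0); simpa using this
      · rintro ⟨h0, h1⟩ o
        cases o with
        | none => exact h0
        | some i =>
          by_cases hi : i = 0
          · subst hi; simpa using h1
          · simp [if_neg hi]
    rw [hset] at h
    rw [h]
    simp only [Option.elim_none, Option.elim_some]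
    have hTRpre : TR ⁻¹' ({t} : Set ℕ) = {ω | TR ω = t} := rfl
    rw [hTRpre]
    congr 1
    rw [← Finset.mul_prod_erase Finset.univ _ (Finset.mem_univ (0 : Fin (k + 1)))]
    have h0 : μ (T 0 ⁻¹' (if (0 : Fin (k + 1)) = 0 then Set.Iic t else Set.univ)) =
        μ {ω | T 0 ω ≤ t} := by rfl
    rw [h0]
    have hrest : (∏ i ∈ Finset.univ.erase (0 : Fin (k + 1)),
        μ (T i ⁻¹' (if i = 0 then Set.Iic t else Set.univ))) = 1 := by
      refine Finset.prod_eq_one fun i hi => by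
        simp [(Finset.mem_erase.mp hi).1]
    rw [hrest, mul_one]
  -- fact3
  have fact3 : ∀ t : ℕ,
      μ ({ω | TR ω = t} ∩ {ω | ∀ i, i ≠ 0 → t < T i ω}) =
        μ {ω | TR ω = t} * μ {ω | ∀ i, i ≠ 0 → t < T i ω} := by
    intro t
    have h := haux (fun o => o.elim {t}
      (fun i => if i = 0 then Set.univ else Set.Ioi t))
    have hset : (⋂ o, (Option.elim o TR T) ⁻¹' (Option.elim o {t}
        (fun i => if i = 0 then Set.univ else Set.Ioi t))) =
        {ω | TR ω = t} ∩ {ω | ∀ i, i ≠ 0 → t < T i ω} := by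
      ext ω
      simp only [Set.mem_iInter, Set.mem_inter_iff, Set.mem_setOf_eq]
      constructor
      · intro h
        refine ⟨h none, fun i hi => ?_⟩
        have := h (some i); simpa [if_neg hi] using this
      · rintro ⟨h0, h1⟩ o
        cases o with
        | none => exact h0
        | some i =>
          by_cases hi : i = 0
          · simp [hi]
          · simpa [if_neg hi] using h1 i hi
    rw [hset] at h
    rw [h, hG t]
    simp only [Option.elim_none, Option.elim_some]
    have hTRpre : TR ⁻¹' ({t} : Set ℕ) = {ω | TR ω = t} := rfl
    rw [hTRpre]
    congr 1
    rw [← Finset.mul_prod_erase Finset.univ _ (Finset.mem_univ (0 : Fin (k + 1)))]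
    have h0 : μ (T 0 ⁻¹' (if (0 : Fin (k + 1)) = 0 then Set.univ else Set.Ioi t)) = 1 := by
      simp
    rw [h0, one_mul]
    refine Finset.prod_congr rfl fun i hi => ?_
    congr 1
    ext ω
    simp [(Finset.mem_erase.mp hi).1]
  -- partition by value of TR
  have hpart : ∀ (E : Set Ω), MeasurableSet E →
      μ E = ∑' t : ℕ, μ ({ω | TR ω = t} ∩ E) := by
    intro E hE
    have hcover : E = ⋃ t : ℕ, {ω | TR ω = t} ∩ E := by
      ext ω
      constructor
      · intro h; exact Set.mem_iUnion.mpr ⟨TR ω, rfl, h⟩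
      · intro h
        rcases Set.mem_iUnion.mp h with ⟨t, -, h2⟩
        exact h2
    conv_lhs => rw [hcover]
    refine measure_iUnion ?_ (fun t => (hTR (measurableSet_singleton t)).inter hE)
    intro s t hst
    refine Set.disjoint_left.mpr ?_
    rintro ω ⟨h1, -⟩ ⟨h2, -⟩
    exact hst (by rw [← h1, h2])
  -- measurability of the three events
  have hmA : MeasurableSet {ω | T 0 ω ≤ TR ω} := measurableSet_le (hT 0) hTR
  have hmB : MeasurableSet {ω | ∀ i, i ≠ 0 → TR ω < T i ω} := by
    have heq : {ω | ∀ i, i ≠ 0 → TR ω < T i ω} =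
        ⋂ i, ⋂ (_ : i ≠ 0), {ω | TR ω < T i ω} := by
      ext ω; simp
    rw [heq]
    exact MeasurableSet.iInter fun i => MeasurableSet.iInter fun _ =>
      measurableSet_lt hTR (hT i)
  have hmAB : MeasurableSet {ω | T 0 ω ≤ TR ω ∧ ∀ i, i ≠ 0 → TR ω < T i ω} := by
    have heq : {ω | T 0 ω ≤ TR ω ∧ ∀ i, i ≠ 0 → TR ω < T i ω} =
        {ω | T 0 ω ≤ TR ω} ∩ {ω | ∀ i, i ≠ 0 → TR ω < T i ω} := rfl
    rw [heq]; exact hmA.inter hmB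
  -- slice identities
  have hsliceA : ∀ t : ℕ, {ω | TR ω = t} ∩ {ω | T 0 ω ≤ TR ω} =
      {ω | TR ω = t} ∩ {ω | T 0 ω ≤ t} := by
    intro t; ext ω
    simp only [Set.mem_inter_iff, Set.mem_setOf_eq]
    constructor
    · rintro ⟨h1, h2⟩; exact ⟨h1, by rw [← h1]; exact h2⟩
    · rintro ⟨h1, h2⟩; exact ⟨h1, by rw [h1]; exact h2⟩
  have hsliceB : ∀ t : ℕ, {ω | TR ω = t} ∩ {ω | ∀ i, i ≠ 0 → TR ω < T i ω} =
      {ω | TR ω = t} ∩ {ω | ∀ i, i ≠ 0 → t < T i ω} := by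
    intro t; ext ω
    simp only [Set.mem_inter_iff, Set.mem_setOf_eq]
    constructor
    · rintro ⟨h1, h2⟩; exact ⟨h1, fun i hi => by rw [← h1]; exact h2 i hi⟩
    · rintro ⟨h1, h2⟩; exact ⟨h1, fun i hi => by rw [h1]; exact h2 i hi⟩
  have hsliceAB : ∀ t : ℕ,
      {ω | TR ω = t} ∩ {ω | T 0 ω ≤ TR ω ∧ ∀ i, i ≠ 0 → TR ω < T i ω} =
      {ω | TR ω = t} ∩ {ω | T 0 ω ≤ t ∧ ∀ i, i ≠ 0 → t < T i ω} := by
    intro t; ext ω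
    simp only [Set.mem_inter_iff, Set.mem_setOf_eq]
    constructor
    · rintro ⟨h1, h2, h3⟩
      exact ⟨h1, by rw [← h1]; exact h2, fun i hi => by rw [← h1]; exact h3 i hi⟩
    · rintro ⟨h1, h2, h3⟩
      exact ⟨h1, by rw [h1]; exact h2, fun i hi => by rw [h1]; exact h3 i hi⟩
  -- sum decompositions
  have hPsum : ∑' t : ℕ, μ {ω | TR ω = t} = 1 := by
    have h := hpart Set.univ MeasurableSet.univ
    rw [measure_univ] at h
    simp only [Set.inter_univ] at h
    exact h.symm
  have hA : μ {ω | T 0 ω ≤ TR ω} =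
      ∑' t : ℕ, μ {ω | TR ω = t} * μ {ω | T 0 ω ≤ t} := by
    rw [hpart _ hmA]
    exact tsum_congr fun t => by rw [hsliceA t, fact2 t]
  have hB : μ {ω | ∀ i, i ≠ 0 → TR ω < T i ω} =
      ∑' t : ℕ, μ {ω | TR ω = t} * μ {ω | ∀ i, i ≠ 0 → t < T i ω} := by
    rw [hpart _ hmB]
    exact tsum_congr fun t => by rw [hsliceB t, fact3 t]
  have hAB : μ {ω | T 0 ω ≤ TR ω ∧ ∀ i, i ≠ 0 → TR ω < T i ω} =
      ∑' t : ℕ, μ {ω | TR ω = t} *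
        (μ {ω | T 0 ω ≤ t} * μ {ω | ∀ i, i ≠ 0 → t < T i ω}) := by
    rw [hpart _ hmAB]
    exact tsum_congr fun t => by rw [hsliceAB t, fact1 t]
  rw [hAB, hA, hB]
  -- finiteness bounds
  have hble : ∀ (f : ℕ → ENNReal), (∀ t, f t ≤ 1) →
      (∑' t : ℕ, μ {ω | TR ω = t} * f t) ≤ 1 := by
    intro f hf
    calc (∑' t : ℕ, μ {ω | TR ω = t} * f t)
        ≤ ∑' t : ℕ, μ {ω | TR ω = t} * 1 :=
          ENNReal.tsum_le_tsum fun t => mul_le_mul_right (hf t) _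
      _ = ∑' t : ℕ, μ {ω | TR ω = t} := by simp
      _ = 1 := hPsum
  have hfin1 : (∑' t : ℕ, μ {ω | TR ω = t} *
      (μ {ω | T 0 ω ≤ t} * μ {ω | ∀ i, i ≠ 0 → t < T i ω})) ≠ ⊤ :=
    (lt_of_le_of_lt (hble _ fun t => mul_le_one' prob_le_one prob_le_one)
      ENNReal.one_lt_top).ne
  have hfin2 : (∑' t : ℕ, μ {ω | TR ω = t} * μ {ω | T 0 ω ≤ t}) ≠ ⊤ :=
    (lt_of_le_of_lt (hble _ fun t => prob_le_one) ENNReal.one_lt_top).ne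
  have hfin3 : (∑' t : ℕ, μ {ω | TR ω = t} * μ {ω | ∀ i, i ≠ 0 → t < T i ω}) ≠ ⊤ :=
    (lt_of_le_of_lt (hble _ fun t => prob_le_one) ENNReal.one_lt_top).ne
  refine (ENNReal.toReal_le_toReal hfin1 (ENNReal.mul_ne_top hfin2 hfin3)).mp ?_
  rw [ENNReal.toReal_mul]
  rw [ENNReal.tsum_toReal_eq (fun t => ENNReal.mul_ne_top (measure_ne_top μ _)
    (ENNReal.mul_ne_top (measure_ne_top μ _) (measure_ne_top μ _)))]
  rw [ENNReal.tsum_toReal_eq (fun t => ENNReal.mul_ne_top (measure_ne_top μ _)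
    (measure_ne_top μ _))]
  rw [ENNReal.tsum_toReal_eq (fun t => ENNReal.mul_ne_top (measure_ne_top μ _)
    (measure_ne_top μ _))]
  simp only [ENNReal.toReal_mul]
  have hone : ∀ s : Set Ω, (μ s).toReal ≤ 1 := fun s => by
    simpa using ENNReal.toReal_mono ENNReal.one_ne_top (prob_le_one (μ := μ) (s := s))
  refine cheb_aux (fun t => (μ {ω | TR ω = t}).toReal)
    (fun t => (μ {ω | T 0 ω ≤ t}).toReal)
    (fun t => (μ {ω | ∀ i, i ≠ 0 → t < T i ω}).toReal)
    (fun t => ENNReal.toReal_nonneg) (fun t => ENNReal.toReal_nonneg)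
    (fun t => hone _) (fun t => ENNReal.toReal_nonneg) (fun t => hone _)
    ?_ ?_ ?_ ?_
  · intro s t hst
    exact ENNReal.toReal_mono (measure_ne_top μ _)
      (measure_mono fun ω hω => le_trans hω hst)
  · intro s t hst
    exact ENNReal.toReal_mono (measure_ne_top μ _)
      (measure_mono fun ω hω i hi => lt_of_le_of_lt hst (hω i hi))
  · exact ENNReal.summable_toReal (by rw [hPsum]; exact ENNReal.one_ne_top)
  · rw [← ENNReal.tsum_toReal_eq (fun t => measure_ne_top μ _), hPsum, ENNReal.toReal_one]
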